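/- For the energy harvesting two-hop channel with infinite batteries and α_1, α_2 ∈ [0,1]: the supremum of the sum-throughput Σ_{i=1}^{N} min{ (1/2)·log(1 + h_1 p_{1,i}/σ_2²), (1/2)·log(1 + h_2 p_{2,i}/σ_1²) } over all feasible policies equals its supremum over all feasible procrastinating policies. -/

import Mathlib

open Finset

namespace Stmt16

variable (N : ℕ)

/-- Extend a `Fin N`-indexed vector to `ℕ` by zero. -/
def extN (f : Fin N → ℝ) (n : ℕ) : ℝ := if h : n < N then f ⟨n, h⟩ else 0

lemma extN_fin (f : Fin N → ℝ) (j : Fin N) : extN N f (j : ℕ) = f j := by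
  simp [extN, j.isLt]

lemma extN_nonneg {f : Fin N → ℝ} (hf : ∀ j, 0 ≤ f j) (n : ℕ) : 0 ≤ extN N f n := by
  unfold extN; split
  · exact hf _
  · exact le_rfl

lemma extN_update (f : Fin N → ℝ) (j : Fin N) (v : ℝ) (n : ℕ) :
    extN N (Function.update f j v) n = extN N f n + (if n = (j : ℕ) then v - f j else 0) := by
  unfold extN
  split
  · rename_i h
    rcases eq_or_ne n (j : ℕ) with he | he
    · have hj : (⟨n, h⟩ : Fin N) = j := Fin.ext he
      rw [hj, Function.update_self, if_pos he]
      ring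
    · have : (⟨n, h⟩ : Fin N) ≠ j := by simp [Fin.ext_iff, he]
      simp [Function.update_of_ne this, he]
  · rename_i h
    have : n ≠ (j : ℕ) := fun hn => h (hn ▸ j.isLt)
    simp [this]

/-- Partial sums of the zero-extension. -/
def SE (f : Fin N → ℝ) (m : ℕ) : ℝ := ∑ n ∈ range m, extN N f n

lemma SE_update (f : Fin N → ℝ) (j : Fin N) (v : ℝ) (m : ℕ) :
    SE N (Function.update f j v) m = SE N f m + (if (j : ℕ) < m then v - f j else 0) := by
  unfold SE
  rw [Finset.sum_congr rfl fun n _ => extN_update N f j v n, Finset.sum_add_distrib,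
    Finset.sum_ite_eq' (range m) (j : ℕ) (fun _ => v - f j)]
  simp

lemma SE_nonneg {f : Fin N → ℝ} (hf : ∀ j, 0 ≤ f j) (m : ℕ) : 0 ≤ SE N f m :=
  Finset.sum_nonneg fun n _ => extN_nonneg N hf n

lemma SE_succ_fin (f : Fin N → ℝ) (j : Fin N) :
    SE N f ((j : ℕ) + 1) = SE N f j + f j := by
  unfold SE; rw [Finset.sum_range_succ, extN_fin]

lemma cum_split (c : ℕ → ℝ) (a : ℝ) (f g : Fin N → ℝ) (m : ℕ) :
    ∑ n ∈ range m, (c n + a * extN N g n - extN N f n)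
      = (∑ n ∈ range m, c n) + a * SE N g m - SE N f m := by
  unfold SE
  rw [Finset.sum_sub_distrib, Finset.sum_add_distrib, Finset.mul_sum]

def Psi (f : Fin N → ℝ) : ℝ := ∑ j : Fin N, ((N : ℝ) - (j : ℕ)) * f j

lemma Psi_update (f : Fin N → ℝ) (k : Fin N) (v : ℝ) :
    Psi N (Function.update f k v) = Psi N f + ((N : ℝ) - (k : ℕ)) * (v - f k) := by
  unfold Psi
  have : ∀ j : Fin N, ((N : ℝ) - (j : ℕ)) * (Function.update f k v) j
      = ((N : ℝ) - (j : ℕ)) * f j + (if j = k then ((N : ℝ) - (k : ℕ)) * (v - f k) else 0) := by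
    intro j
    rcases eq_or_ne j k with h | h
    · subst h; simp; ring
    · simp [Function.update_of_ne h, h]
  rw [Finset.sum_congr rfl fun j _ => this j, Finset.sum_add_distrib,
    Finset.sum_ite_eq' Finset.univ k (fun _ => ((N : ℝ) - (k : ℕ)) * (v - f k))]
  simp

def Phi (x : (Fin N → ℝ) × (Fin N → ℝ)) : ℝ := Psi N x.1 + Psi N x.2

lemma coeff_ge_one (j : Fin N) : (1 : ℝ) ≤ (N : ℝ) - (j : ℕ) := by
  have : (j : ℕ) + 1 ≤ N := j.isLt
  have := (Nat.cast_le (α := ℝ)).2 this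
  push_cast at this
  linarith

lemma Psi_nonneg {f : Fin N → ℝ} (hf : ∀ j, 0 ≤ f j) : 0 ≤ Psi N f :=
  Finset.sum_nonneg fun j _ => mul_nonneg (by linarith [coeff_ge_one N j]) (hf j)

lemma le_Psi {f : Fin N → ℝ} (hf : ∀ j, 0 ≤ f j) (k : Fin N) : f k ≤ Psi N f := by
  calc f k ≤ ((N : ℝ) - (k : ℕ)) * f k := le_mul_of_one_le_left (hf k) (coeff_ge_one N k)
  _ ≤ Psi N f := Finset.single_le_sum
      (f := fun j : Fin N => ((N : ℝ) - (j : ℕ)) * f j)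
      (fun j _ => mul_nonneg (by linarith [coeff_ge_one N j]) (hf j)) (Finset.mem_univ k)

/-- Feasibility of a transfer schedule `x = (d1, d2)` supporting given net harvests
`c1 = E1 - p1`, `c2 = E2 - p2`. -/
def Feas (c1 c2 : ℕ → ℝ) (a1 a2 : ℝ) (x : (Fin N → ℝ) × (Fin N → ℝ)) : Prop :=
  (∀ j, 0 ≤ x.1 j ∧ 0 ≤ x.2 j) ∧
  ∀ i < N, 0 ≤ (∑ n ∈ range (i + 1), c1 n) + a2 * SE N x.2 (i + 1) - SE N x.1 (i + 1) ∧
           0 ≤ (∑ n ∈ range (i + 1), c2 n) + a1 * SE N x.1 (i + 1) - SE N x.2 (i + 1)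

lemma Feas_swap {c1 c2 : ℕ → ℝ} {a1 a2 : ℝ} {x : (Fin N → ℝ) × (Fin N → ℝ)}
    (h : Feas N c1 c2 a1 a2 x) : Feas N c2 c1 a2 a1 (x.2, x.1) :=
  ⟨fun j => ⟨(h.1 j).2, (h.1 j).1⟩, fun i hi => ⟨(h.2 i hi).2, (h.2 i hi).1⟩⟩

lemma Phi_swap (x : (Fin N → ℝ) × (Fin N → ℝ)) : Phi N (x.2, x.1) = Phi N x :=
  add_comm _ _

lemma side1 (E1 p1 c2 : ℕ → ℝ) {a1 a2 : ℝ}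
    (ha1 : a1 ∈ Set.Icc (0:ℝ) 1) (ha2 : a2 ∈ Set.Icc (0:ℝ) 1)
    (hE1 : ∀ n < N, 0 ≤ E1 n) (hp1 : ∀ n < N, 0 ≤ p1 n)
    {x : (Fin N → ℝ) × (Fin N → ℝ)}
    (hx : Feas N (fun n => E1 n - p1 n) c2 a1 a2 x)
    (hmin : ∀ y, Feas N (fun n => E1 n - p1 n) c2 a1 a2 y → Phi N x ≤ Phi N y)
    (i : Fin N) : a2 * x.2 i ≤ p1 i := by
  obtain ⟨ha10, ha11⟩ := ha1
  obtain ⟨ha20, ha21⟩ := ha2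
  by_contra hcon
  push_neg at hcon
  set B1 : ℕ → ℝ := fun m => (∑ n ∈ range m, (E1 n - p1 n)) + a2 * SE N x.2 m - SE N x.1 m
    with hB1def
  set B2 : ℕ → ℝ := fun m => (∑ n ∈ range m, c2 n) + a1 * SE N x.1 m - SE N x.2 m with hB2def
  have hB1 : ∀ m ≤ N, 0 ≤ B1 m := by
    intro m hm
    cases m with
    | zero => simp [hB1def, SE]
    | succ k => exact (hx.2 k (by omega)).1
  have hB2 : ∀ m ≤ N, 0 ≤ B2 m := by
    intro m hm
    cases m with
    | zero => simp [hB2def, SE]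
    | succ k => exact (hx.2 k (by omega)).2
  have hp1i : 0 ≤ p1 i := hp1 i i.isLt
  have hx2i : 0 ≤ x.2 i := (hx.1 i).2
  have ha2pos : 0 < a2 := by nlinarith
  have hx2pos : 0 < x.2 i := by nlinarith
  have ha1a2 : a1 * a2 ≤ 1 := mul_le_one₀ ha11 ha20 ha21
  have hB1succ : B1 ((i : ℕ) + 1) = B1 i + (E1 i - p1 i + a2 * x.2 i - x.1 i) := by
    simp only [hB1def, SE_succ_fin, Finset.sum_range_succ]
    ring
  have hiN : (i : ℕ) + 1 ≤ N := i.isLt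
  rcases eq_or_lt_of_le (hB1 ((i : ℕ) + 1) hiN) with hBz | hBpos
  · -- round-trip cancellation
    have hB1i : 0 ≤ B1 i := hB1 i (le_of_lt i.isLt)
    have hE1i : 0 ≤ E1 i := hE1 i i.isLt
    have hx1i : a2 * x.2 i - p1 i ≤ x.1 i := by linarith [hB1succ, hBz.symm]
    have hx1pos : 0 < x.1 i := by linarith
    set ε := min (x.2 i) (x.1 i / a2) with hεdef
    have hεpos : 0 < ε := lt_min hx2pos (div_pos hx1pos ha2pos)
    have hε2 : ε ≤ x.2 i := min_le_left _ _
    have hε1 : a2 * ε ≤ x.1 i := by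
      have h := mul_le_mul_of_nonneg_left (min_le_right (x.2 i) (x.1 i / a2)) ha2pos.le
      rwa [mul_comm a2 (x.1 i / a2), div_mul_cancel₀ _ (ne_of_gt ha2pos)] at h
    set y : (Fin N → ℝ) × (Fin N → ℝ) :=
      (Function.update x.1 i (x.1 i - a2 * ε), Function.update x.2 i (x.2 i - ε)) with hydef
    have hSE1 : ∀ m, SE N y.1 m = SE N x.1 m + (if (i : ℕ) < m then -(a2 * ε) else 0) := by
      intro m
      simp only [hydef]
      rw [SE_update]
      congr 1
      split_ifs <;> ring
    have hSE2 : ∀ m, SE N y.2 m = SE N x.2 m + (if (i : ℕ) < m then -ε else 0) := by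
      intro m
      simp only [hydef]
      rw [SE_update]
      congr 1
      split_ifs <;> ring
    have hyF : Feas N (fun n => E1 n - p1 n) c2 a1 a2 y := by
      constructor
      · intro j
        rcases eq_or_ne j i with h | h
        · subst h
          simp only [hydef, Function.update_self]
          constructor <;> linarith
        · simp only [hydef, Function.update_of_ne h]
          exact hx.1 j
      · intro m hm
        have e1 := hSE1 (m + 1)
        have e2 := hSE2 (m + 1)
        have hb1 := hB1 (m + 1) (by omega)
        have hb2 := hB2 (m + 1) (by omega)
        simp only [hB1def] at hb1
        simp only [hB2def] at hb2
        have hk : a1 * (a2 * ε) ≤ ε := by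
          calc a1 * (a2 * ε) = (a1 * a2) * ε := by ring
          _ ≤ 1 * ε := mul_le_mul_of_nonneg_right ha1a2 hεpos.le
          _ = ε := one_mul ε
        constructor
        · rw [e1, e2, mul_add]
          split_ifs <;> simp only [mul_neg, mul_zero] <;> linarith
        · rw [e1, e2, mul_add]
          split_ifs <;> simp only [mul_neg, mul_zero] <;> linarith
    have hPhi : Phi N y = Phi N x - ((N : ℝ) - (i : ℕ)) * (a2 * ε + ε) := by
      simp only [Phi, hydef, Psi_update]
      ring
    have hge := hmin y hyF
    have hc := coeff_ge_one N i
    have hpos : 0 < ((N : ℝ) - (i : ℕ)) * (a2 * ε + ε) :=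
      mul_pos (by linarith) (by positivity)
    linarith
  · by_cases hi1 : (i : ℕ) + 1 < N
    · -- delay
      set i' : Fin N := ⟨(i : ℕ) + 1, hi1⟩ with hi'def
      have hii' : i' ≠ i := by simp [hi'def, Fin.ext_iff]
      set ε := min (x.2 i) (B1 ((i : ℕ) + 1) / a2) with hεdef
      have hεpos : 0 < ε := lt_min hx2pos (div_pos hBpos ha2pos)
      have hε2 : ε ≤ x.2 i := min_le_left _ _
      have hεB : a2 * ε ≤ B1 ((i : ℕ) + 1) := by
        have h := mul_le_mul_of_nonneg_left
          (min_le_right (x.2 i) (B1 ((i : ℕ) + 1) / a2)) ha2pos.le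
        rwa [mul_comm a2 (B1 ((i : ℕ) + 1) / a2), div_mul_cancel₀ _ (ne_of_gt ha2pos)] at h
      set z : Fin N → ℝ := Function.update x.2 i (x.2 i - ε) with hzdef
      have hzi' : z i' = x.2 i' := by
        simp only [hzdef]
        exact Function.update_of_ne hii' _ _
      set y : (Fin N → ℝ) × (Fin N → ℝ) := (x.1, Function.update z i' (x.2 i' + ε)) with hydef
      have hSEz : ∀ m, SE N z m = SE N x.2 m + (if (i : ℕ) < m then -ε else 0) := by
        intro m
        simp only [hzdef]
        rw [SE_update]
        congr 1
        split_ifs <;> ring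
      have hSE2 : ∀ m, SE N y.2 m
          = SE N x.2 m + (if (i : ℕ) < m then -ε else 0)
            + (if (i : ℕ) + 1 < m then ε else 0) := by
        intro m
        simp only [hydef]
        rw [SE_update, hzi', hSEz]
        have : ((i' : Fin N) : ℕ) = (i : ℕ) + 1 := rfl
        rw [this]
        congr 1
        split_ifs <;> ring
      have hyF : Feas N (fun n => E1 n - p1 n) c2 a1 a2 y := by
        constructor
        · intro j
          refine ⟨(hx.1 j).1, ?_⟩
          show 0 ≤ Function.update z i' (x.2 i' + ε) j
          rcases eq_or_ne j i' with h | h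
          · subst h
            simp only [Function.update_self]
            linarith [(hx.1 i').2]
          · rw [Function.update_of_ne h]
            simp only [hzdef]
            rcases eq_or_ne j i with h2 | h2
            · subst h2
              simp only [Function.update_self]
              linarith
            · rw [Function.update_of_ne h2]
              exact (hx.1 j).2
        · intro m hm
          have e2 := hSE2 (m + 1)
          have hb1 := hB1 (m + 1) (by omega)
          have hb2 := hB2 (m + 1) (by omega)
          simp only [hB1def] at hb1 hεB
          simp only [hB2def] at hb2
          constructor
          · show 0 ≤ (∑ n ∈ range (m + 1), (E1 n - p1 n)) + a2 * SE N y.2 (m + 1) - SE N y.1 (m + 1)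
            have hy1 : y.1 = x.1 := rfl
            rw [e2, hy1, mul_add, mul_add]
            split_ifs with h1 h2
            · simp only [mul_neg]; linarith
            · have hm1 : m + 1 = (i : ℕ) + 1 := by omega
              rw [hm1] at hb1 ⊢
              simp only [mul_neg, mul_zero]
              rw [hm1] at *
              linarith [hεB]
            · omega
            · simp only [mul_zero]; linarith
          · show 0 ≤ (∑ n ∈ range (m + 1), c2 n) + a1 * SE N y.1 (m + 1) - SE N y.2 (m + 1)
            have hy1 : y.1 = x.1 := rfl
            rw [e2, hy1]
            split_ifs <;> first | omega | linarith
      have hPhi : Phi N y = Phi N x - ε := by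
        have hzi'2 : Function.update x.2 i (x.2 i - ε) i' = x.2 i' :=
          Function.update_of_ne hii' _ _
        simp only [Phi, hydef, Psi_update, hzdef, hzi'2]
        push_cast
        rw [show (((i' : Fin N) : ℕ) : ℝ) = ((i : ℕ) : ℝ) + 1 by simp [hi'def]]
        ring
      have hge := hmin y hyF
      linarith
    · -- last slot, pure reduction
      have hNi : N = (i : ℕ) + 1 := by omega
      set ε := min (x.2 i) (B1 ((i : ℕ) + 1) / a2) with hεdef
      have hεpos : 0 < ε := lt_min hx2pos (div_pos hBpos ha2pos)
      have hε2 : ε ≤ x.2 i := min_le_left _ _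
      have hεB : a2 * ε ≤ B1 ((i : ℕ) + 1) := by
        have h := mul_le_mul_of_nonneg_left
          (min_le_right (x.2 i) (B1 ((i : ℕ) + 1) / a2)) ha2pos.le
        rwa [mul_comm a2 (B1 ((i : ℕ) + 1) / a2), div_mul_cancel₀ _ (ne_of_gt ha2pos)] at h
      set y : (Fin N → ℝ) × (Fin N → ℝ) := (x.1, Function.update x.2 i (x.2 i - ε)) with hydef
      have hSE2 : ∀ m, SE N y.2 m = SE N x.2 m + (if (i : ℕ) < m then -ε else 0) := by
        intro m
        simp only [hydef]
        rw [SE_update]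
        congr 1
        split_ifs <;> ring
      have hyF : Feas N (fun n => E1 n - p1 n) c2 a1 a2 y := by
        constructor
        · intro j
          refine ⟨(hx.1 j).1, ?_⟩
          show 0 ≤ Function.update x.2 i (x.2 i - ε) j
          rcases eq_or_ne j i with h | h
          · subst h; simp only [Function.update_self]; linarith
          · rw [Function.update_of_ne h]; exact (hx.1 j).2
        · intro m hm
          have e2 := hSE2 (m + 1)
          have hb1 := hB1 (m + 1) (by omega)
          have hb2 := hB2 (m + 1) (by omega)
          simp only [hB1def] at hb1 hεB
          simp only [hB2def] at hb2
          constructor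
          · show 0 ≤ (∑ n ∈ range (m + 1), (E1 n - p1 n)) + a2 * SE N y.2 (m + 1) - SE N y.1 (m + 1)
            have hy1 : y.1 = x.1 := rfl
            rw [e2, hy1, mul_add]
            split_ifs with h1
            · have hm1 : m + 1 = (i : ℕ) + 1 := by omega
              rw [hm1] at *
              simp only [mul_neg]
              linarith [hεB]
            · simp only [mul_zero]; linarith
          · show 0 ≤ (∑ n ∈ range (m + 1), c2 n) + a1 * SE N y.1 (m + 1) - SE N y.2 (m + 1)
            have hy1 : y.1 = x.1 := rfl
            rw [e2, hy1]
            split_ifs <;> linarith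
      have hPhi : Phi N y = Phi N x - ((N : ℝ) - (i : ℕ)) * ε := by
        simp only [Phi, hydef, Psi_update]
        ring
      have hge := hmin y hyF
      have hc := coeff_ge_one N i
      have hpos : 0 < ((N : ℝ) - (i : ℕ)) * ε := mul_pos (by linarith) hεpos
      linarith

lemma exists_proc (E1 E2 p1 p2 : ℕ → ℝ) {a1 a2 : ℝ}
    (ha1 : a1 ∈ Set.Icc (0:ℝ) 1) (ha2 : a2 ∈ Set.Icc (0:ℝ) 1)
    (hE1 : ∀ n < N, 0 ≤ E1 n) (hE2 : ∀ n < N, 0 ≤ E2 n)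
    (hp1 : ∀ n < N, 0 ≤ p1 n) (hp2 : ∀ n < N, 0 ≤ p2 n)
    (x0 : (Fin N → ℝ) × (Fin N → ℝ))
    (hx0 : Feas N (fun n => E1 n - p1 n) (fun n => E2 n - p2 n) a1 a2 x0) :
    ∃ x, Feas N (fun n => E1 n - p1 n) (fun n => E2 n - p2 n) a1 a2 x ∧
      (∀ i : Fin N, a2 * x.2 i ≤ p1 i) ∧ (∀ i : Fin N, a1 * x.1 i ≤ p2 i) := by
  set c1 : ℕ → ℝ := fun n => E1 n - p1 n with hc1
  set c2 : ℕ → ℝ := fun n => E2 n - p2 n with hc2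
  set M := Phi N x0 with hM
  set K : Set ((Fin N → ℝ) × (Fin N → ℝ)) := {x | Feas N c1 c2 a1 a2 x ∧ Phi N x ≤ M} with hK
  have hcext : ∀ (n : ℕ), Continuous fun f : Fin N → ℝ => extN N f n := by
    intro n
    unfold extN
    by_cases h : n < N
    · simp only [dif_pos h]; exact continuous_apply _
    · simp only [dif_neg h]; exact continuous_const
  have hcSE : ∀ m, Continuous fun f : Fin N → ℝ => SE N f m := fun m =>
    continuous_finset_sum _ fun n _ => hcext n
  have hcPsi : Continuous fun f : Fin N → ℝ => Psi N f :=
    continuous_finset_sum _ fun j _ => continuous_const.mul (continuous_apply j)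
  have hcPhi : Continuous (Phi N) :=
    (hcPsi.comp continuous_fst).add (hcPsi.comp continuous_snd)
  have hKclosed : IsClosed K := by
    have heq : K = ({x : (Fin N → ℝ) × (Fin N → ℝ) | ∀ j, 0 ≤ x.1 j}
        ∩ {x | ∀ j, 0 ≤ x.2 j}
        ∩ (⋂ j : Fin N, {x | 0 ≤ (∑ n ∈ range ((j : ℕ) + 1), c1 n)
            + a2 * SE N x.2 ((j : ℕ) + 1) - SE N x.1 ((j : ℕ) + 1)})
        ∩ (⋂ j : Fin N, {x | 0 ≤ (∑ n ∈ range ((j : ℕ) + 1), c2 n)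
            + a1 * SE N x.1 ((j : ℕ) + 1) - SE N x.2 ((j : ℕ) + 1)})
        ∩ {x | Phi N x ≤ M}) := by
      ext x
      simp only [hK, Feas, Set.mem_inter_iff, Set.mem_setOf_eq, Set.mem_iInter]
      constructor
      · rintro ⟨⟨hnn, hcons⟩, hPhiM⟩
        exact ⟨⟨⟨⟨fun j => (hnn j).1, fun j => (hnn j).2⟩,
          fun j => (hcons j j.isLt).1⟩, fun j => (hcons j j.isLt).2⟩, hPhiM⟩
      · rintro ⟨⟨⟨⟨h1, h2⟩, h3⟩, h4⟩, hPhiM⟩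
        exact ⟨⟨fun j => ⟨h1 j, h2 j⟩, fun i hi => ⟨h3 ⟨i, hi⟩, h4 ⟨i, hi⟩⟩⟩, hPhiM⟩
    rw [heq]
    refine IsClosed.inter (IsClosed.inter (IsClosed.inter (IsClosed.inter ?_ ?_) ?_) ?_) ?_
    · have : {x : (Fin N → ℝ) × (Fin N → ℝ) | ∀ j, 0 ≤ x.1 j}
          = ⋂ j : Fin N, {x | 0 ≤ x.1 j} := by ext; simp
      rw [this]
      exact isClosed_iInter fun j =>
        isClosed_le continuous_const ((continuous_apply j).comp continuous_fst)
    · have : {x : (Fin N → ℝ) × (Fin N → ℝ) | ∀ j, 0 ≤ x.2 j}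
          = ⋂ j : Fin N, {x | 0 ≤ x.2 j} := by ext; simp
      rw [this]
      exact isClosed_iInter fun j =>
        isClosed_le continuous_const ((continuous_apply j).comp continuous_snd)
    · exact isClosed_iInter fun j =>
        isClosed_le continuous_const
          ((continuous_const.add (continuous_const.mul ((hcSE _).comp continuous_snd))).sub
            ((hcSE _).comp continuous_fst))
    · exact isClosed_iInter fun j =>
        isClosed_le continuous_const
          ((continuous_const.add (continuous_const.mul ((hcSE _).comp continuous_fst))).sub
            ((hcSE _).comp continuous_snd))
    · exact isClosed_le hcPhi continuous_const
  have hbox : IsCompact ((Set.univ.pi fun _ : Fin N => Set.Icc (0:ℝ) M)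
      ×ˢ (Set.univ.pi fun _ : Fin N => Set.Icc (0:ℝ) M)) :=
    (isCompact_univ_pi fun _ => isCompact_Icc).prod (isCompact_univ_pi fun _ => isCompact_Icc)
  have hsub : K ⊆ (Set.univ.pi fun _ : Fin N => Set.Icc (0:ℝ) M)
      ×ˢ (Set.univ.pi fun _ : Fin N => Set.Icc (0:ℝ) M) := by
    rintro x ⟨hxF, hPhiM⟩
    have hn1 : ∀ j, 0 ≤ x.1 j := fun j => (hxF.1 j).1
    have hn2 : ∀ j, 0 ≤ x.2 j := fun j => (hxF.1 j).2
    have hPsi1 : 0 ≤ Psi N x.1 := Psi_nonneg N hn1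
    have hPsi2 : 0 ≤ Psi N x.2 := Psi_nonneg N hn2
    constructor
    · intro j _
      exact ⟨hn1 j, by have := le_Psi N hn1 j; simp only [Phi] at hPhiM; linarith⟩
    · intro j _
      exact ⟨hn2 j, by have := le_Psi N hn2 j; simp only [Phi] at hPhiM; linarith⟩
  have hKcpt : IsCompact K := hbox.of_isClosed_subset hKclosed hsub
  have hx0K : x0 ∈ K := ⟨hx0, le_refl _⟩
  obtain ⟨xm, hxmK, hxmin⟩ := hKcpt.exists_isMinOn ⟨x0, hx0K⟩ hcPhi.continuousOn
  have hminK := isMinOn_iff.mp hxmin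
  have hmin' : ∀ y, Feas N c1 c2 a1 a2 y → Phi N xm ≤ Phi N y := by
    intro y hy
    by_cases h : Phi N xm ≤ Phi N y
    · exact h
    · push_neg at h
      have hxmM : Phi N xm ≤ M := hminK x0 hx0K
      exact hminK y ⟨hy, le_trans h.le hxmM⟩
  have proc1 : ∀ i : Fin N, a2 * xm.2 i ≤ p1 i :=
    side1 N E1 p1 c2 ha1 ha2 hE1 hp1 hxmK.1 hmin'
  have hmin'' : ∀ y, Feas N c2 c1 a2 a1 y → Phi N (xm.2, xm.1) ≤ Phi N y := by
    intro y hy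
    rw [Phi_swap]
    calc Phi N xm ≤ Phi N (y.2, y.1) := hmin' _ (Feas_swap N hy)
    _ = Phi N y := Phi_swap N y
  have proc2 : ∀ i : Fin N, a1 * xm.1 i ≤ p2 i :=
    side1 N E2 p2 c1 ha2 ha1 hE2 hp2 (Feas_swap N hxmK.1) hmin''
  exact ⟨xm, hxmK.1, proc1, proc2⟩

lemma sum_conv (c : ℕ → ℝ) (a : ℝ) (d1 d2 : ℕ → ℝ) {i : ℕ} (hi : i < N) :
    ∑ n ∈ range (i + 1), (c n + a * d2 n - d1 n)
      = (∑ n ∈ range (i + 1), c n)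
        + a * SE N (fun j => d2 (j : ℕ)) (i + 1) - SE N (fun j => d1 (j : ℕ)) (i + 1) := by
  rw [← cum_split]
  refine Finset.sum_congr rfl fun n hn => ?_
  have hnN : n < N := lt_of_lt_of_le (Finset.mem_range.mp hn) hi
  simp [extN, hnN]

end Stmt16

/-- For the energy harvesting two-hop channel with infinite
batteries, the optimal sum-throughput over feasible policies equals that over
feasible procrastinating policies. -/
theorem stmt_16
    (N : ℕ) (E1 E2 : ℕ → ℝ) (h1 h2 s1 s2 a1 a2 : ℝ)
    (hh1 : 0 < h1) (hh2 : 0 < h2) (hs1 : 0 < s1) (hs2 : 0 < s2)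
    (ha1 : a1 ∈ Set.Icc (0:ℝ) 1) (ha2 : a2 ∈ Set.Icc (0:ℝ) 1)
    (hE : ∀ i < N, 0 ≤ E1 i ∧ 0 ≤ E2 i) :
    sSup {t : ℝ | ∃ p1 p2 d1 d2 : ℕ → ℝ,
        (∀ i < N, 0 ≤ p1 i ∧ 0 ≤ p2 i ∧ 0 ≤ d1 i ∧ 0 ≤ d2 i) ∧
        (∀ i < N,
          0 ≤ ∑ n ∈ Finset.range (i+1), (E1 n - p1 n + a2 * d2 n - d1 n) ∧
          0 ≤ ∑ n ∈ Finset.range (i+1), (E2 n - p2 n + a1 * d1 n - d2 n)) ∧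
        t = ∑ i ∈ Finset.range N,
          min (1/2 * Real.log (1 + h1 * p1 i / s2))
              (1/2 * Real.log (1 + h2 * p2 i / s1))}
    = sSup {t : ℝ | ∃ p1 p2 d1 d2 : ℕ → ℝ,
        (∀ i < N, 0 ≤ p1 i ∧ 0 ≤ p2 i ∧ 0 ≤ d1 i ∧ 0 ≤ d2 i) ∧
        (∀ i < N,
          0 ≤ ∑ n ∈ Finset.range (i+1), (E1 n - p1 n + a2 * d2 n - d1 n) ∧
          0 ≤ ∑ n ∈ Finset.range (i+1), (E2 n - p2 n + a1 * d1 n - d2 n)) ∧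
        (∀ i < N, 0 ≤ p1 i - a2 * d2 i ∧ 0 ≤ p2 i - a1 * d1 i) ∧
        t = ∑ i ∈ Finset.range N,
          min (1/2 * Real.log (1 + h1 * p1 i / s2))
              (1/2 * Real.log (1 + h2 * p2 i / s1))} := by
  apply congrArg sSup
  ext t
  simp only [Set.mem_setOf_eq]
  constructor
  · rintro ⟨p1, p2, d1, d2, hnn, hfeas, ht⟩
    have hp1 : ∀ n < N, 0 ≤ p1 n := fun n hn => (hnn n hn).1
    have hp2 : ∀ n < N, 0 ≤ p2 n := fun n hn => (hnn n hn).2.1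
    have hx0F : Stmt16.Feas N (fun n => E1 n - p1 n) (fun n => E2 n - p2 n) a1 a2
        (fun j => d1 (j : ℕ), fun j => d2 (j : ℕ)) := by
      constructor
      · intro j
        exact ⟨(hnn j j.isLt).2.2.1, (hnn j j.isLt).2.2.2⟩
      · intro i hi
        constructor
        · have h := (hfeas i hi).1
          rwa [Stmt16.sum_conv N (fun n => E1 n - p1 n) a2 d1 d2 hi] at h
        · have h := (hfeas i hi).2
          rwa [Stmt16.sum_conv N (fun n => E2 n - p2 n) a1 d2 d1 hi] at h
    obtain ⟨x, hxF, hproc1, hproc2⟩ := Stmt16.exists_proc N E1 E2 p1 p2 ha1 ha2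
      (fun n hn => (hE n hn).1) (fun n hn => (hE n hn).2) hp1 hp2 _ hx0F
    refine ⟨p1, p2, Stmt16.extN N x.1, Stmt16.extN N x.2, ?_, ?_, ?_, ht⟩
    · intro i hi
      exact ⟨hp1 i hi, hp2 i hi, Stmt16.extN_nonneg N (fun j => (hxF.1 j).1) i,
        Stmt16.extN_nonneg N (fun j => (hxF.1 j).2) i⟩
    · intro i hi
      constructor
      · rw [Stmt16.cum_split N (fun n => E1 n - p1 n) a2 x.1 x.2 (i + 1)]
        exact (hxF.2 i hi).1
      · rw [Stmt16.cum_split N (fun n => E2 n - p2 n) a1 x.2 x.1 (i + 1)]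
        exact (hxF.2 i hi).2
    · intro i hi
      have he2 : Stmt16.extN N x.2 i = x.2 ⟨i, hi⟩ := by simp [Stmt16.extN, hi]
      have he1 : Stmt16.extN N x.1 i = x.1 ⟨i, hi⟩ := by simp [Stmt16.extN, hi]
      rw [he1, he2]
      exact ⟨by linarith [hproc1 ⟨i, hi⟩], by linarith [hproc2 ⟨i, hi⟩]⟩
  · rintro ⟨p1, p2, d1, d2, hnn, hfeas, _, ht⟩
    exact ⟨p1, p2, d1, d2, hnn, hfeas, ht⟩
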